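/- PFO and PTL have the same expressive power: a language L ⊆ Σ* is definable by a PFO sentence if and only if it is PTL-definable. -/
import Mathlib


/-- PTL formulas over alphabet `α`: atoms, conjunction, negation, and the past operator. -/
inductive PTL (α : Type*) : Type _
  | atom : α → PTL α
  | conj : PTL α → PTL α → PTL α
  | neg : PTL α → PTL α
  | past : PTL α → PTL α

/-- Satisfaction of a PTL formula in string `w` at (1-based) position `n ∈ {1,…,N+1}`. -/
def PTL.Sat {α : Type*} (w : List α) : PTL α → ℕ → Prop
  | .atom a, n => 1 ≤ n ∧ w[n - 1]? = some a
  | .conj ψ₁ ψ₂, n => PTL.Sat w ψ₁ n ∧ PTL.Sat w ψ₂ n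
  | .neg ψ, n => ¬ PTL.Sat w ψ n
  | .past ψ, n => ∃ m, 1 ≤ m ∧ m < n ∧ PTL.Sat w ψ m

/-- A string `w` of length `N` satisfies `ψ` iff `w, N+1 ⊨ ψ`. -/
def PTL.Models {α : Type*} (w : List α) (ψ : PTL α) : Prop :=
  PTL.Sat w ψ (w.length + 1)

/-- A language is PTL-definable if it is the set of strings satisfying some PTL formula. -/
def PTLDefinable {α : Type*} (L : Set (List α)) : Prop :=
  ∃ ψ : PTL α, ∀ w : List α, w ∈ L ↔ PTL.Models w ψ

/-- The two variables of PFO. -/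
inductive PVar : Type
  | x
  | y
deriving DecidableEq

/-- The other variable. -/
def PVar.other : PVar → PVar
  | .x => .y
  | .y => .x

/-- PFO formulas: atoms `π_a(v)`, Boolean connectives, bounded existential quantifiers
`∃ v < (other v) : φ` (binding `v`), and the unbounded quantifier `∃ v : φ`. -/
inductive PFO (α : Type*) : Type _
  | atom : α → PVar → PFO α
  | conj : PFO α → PFO α → PFO α
  | neg : PFO α → PFO α
  | existsLt : PVar → PFO α → PFO α
  | existsUnb : PVar → PFO α → PFO α

/-- Free variables of a PFO formula; in `∃ v < (other v) : φ` the bounding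
variable `other v` occurs free. -/
def PFO.freeVars {α : Type*} : PFO α → Finset PVar
  | .atom _ v => {v}
  | .conj φ₁ φ₂ => PFO.freeVars φ₁ ∪ PFO.freeVars φ₂
  | .neg φ => PFO.freeVars φ
  | .existsLt v φ => (PFO.freeVars φ).erase v ∪ {v.other}
  | .existsUnb v φ => (PFO.freeVars φ).erase v

/-- Satisfaction of a PFO formula in string `w` under an assignment `ρ` of the
variables to (1-based) positions. -/
def PFO.Sat {α : Type*} (w : List α) : PFO α → (PVar → ℕ) → Prop
  | .atom a v, ρ => 1 ≤ ρ v ∧ w[ρ v - 1]? = some a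
  | .conj φ₁ φ₂, ρ => PFO.Sat w φ₁ ρ ∧ PFO.Sat w φ₂ ρ
  | .neg φ, ρ => ¬ PFO.Sat w φ ρ
  | .existsLt v φ, ρ => ∃ m, 1 ≤ m ∧ m < ρ v.other ∧ PFO.Sat w φ (Function.update ρ v m)
  | .existsUnb v φ, ρ => ∃ m, 1 ≤ m ∧ m ≤ w.length ∧ PFO.Sat w φ (Function.update ρ v m)

/-- A language is PFO-definable if it is the set of strings satisfying some PFO sentence. -/
def PFODefinable {α : Type*} (L : Set (List α)) : Prop :=
  ∃ φ : PFO α, PFO.freeVars φ = ∅ ∧ ∀ w : List α, w ∈ L ↔ ∀ ρ : PVar → ℕ, PFO.Sat w φ ρ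

section Aux
variable {α : Type*}

@[simp] lemma PVar.other_other : ∀ v : PVar, v.other.other = v := by
  rintro (_|_) <;> rfl

lemma PVar.other_ne : ∀ v : PVar, v.other ≠ v := by
  rintro (_|_) <;> simp [PVar.other]

/-- a PTL formula that is true at every position -/
def tru (a : α) : PTL α := .neg (.conj (.atom a) (.neg (.atom a)))

@[simp] lemma tru_sat (a : α) (w : List α) (n : ℕ) : PTL.Sat w (tru a) n := by
  simp only [tru, PTL.Sat]; tauto

/-- big disjunction -/
def disj (a : α) : List (PTL α) → PTL α
  | [] => .conj (.atom a) (.neg (.atom a))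
  | ψ :: l => .neg ((PTL.neg ψ).conj (PTL.neg (disj a l)))

@[simp] lemma disj_sat (a : α) (w : List α) (n : ℕ) :
    ∀ l : List (PTL α), PTL.Sat w (disj a l) n ↔ ∃ ψ ∈ l, PTL.Sat w ψ n := by
  intro l; induction l with
  | nil => simp [disj, PTL.Sat]
  | cons ψ l ih => simp only [disj, PTL.Sat]; simp [ih]; tauto

/-- some letter occurring in a PFO formula -/
def PFO.wit : PFO α → α
  | .atom a _ => a
  | .conj φ _ => φ.wit
  | .neg φ => φ.wit
  | .existsLt _ φ => φ.wit
  | .existsUnb _ φ => φ.wit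

/-- PFO satisfaction only depends on the values of the free variables. -/
lemma PFO.sat_ext (w : List α) :
    ∀ (φ : PFO α) (ρ ρ' : PVar → ℕ), (∀ v ∈ φ.freeVars, ρ v = ρ' v) →
      (PFO.Sat w φ ρ ↔ PFO.Sat w φ ρ') := by
  intro φ
  induction φ with
  | atom a v => intro ρ ρ' h; simp only [PFO.Sat, h v (by simp [PFO.freeVars])]
  | conj φ₁ φ₂ ih₁ ih₂ =>
      intro ρ ρ' h
      simp only [PFO.Sat]
      rw [ih₁ ρ ρ' (fun v hv => h v (by simp [PFO.freeVars, hv])),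
          ih₂ ρ ρ' (fun v hv => h v (by simp [PFO.freeVars, hv]))]
  | neg φ ih => intro ρ ρ' h; simp only [PFO.Sat]; rw [ih ρ ρ' h]
  | existsLt v φ ih =>
      intro ρ ρ' h
      have hother : ρ v.other = ρ' v.other := h v.other (by simp [PFO.freeVars])
      simp only [PFO.Sat, hother]
      refine exists_congr fun m => and_congr_right fun _ => and_congr_right fun _ => ?_
      refine ih _ _ fun u hu => ?_
      rcases eq_or_ne u v with rfl | hne
      · simp
      · rw [Function.update_of_ne hne, Function.update_of_ne hne]
        exact h u (by simp [PFO.freeVars, Finset.mem_erase, hne, hu])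
  | existsUnb v φ ih =>
      intro ρ ρ' h
      simp only [PFO.Sat]
      refine exists_congr fun m => and_congr_right fun _ => and_congr_right fun _ => ?_
      refine ih _ _ fun u hu => ?_
      rcases eq_or_ne u v with rfl | hne
      · simp
      · rw [Function.update_of_ne hne, Function.update_of_ne hne]
        exact h u (by simp [PFO.freeVars, Finset.mem_erase, hne, hu])

/-- DNF for negation of a list of triples. -/
def negDNF (a : α) : List (PTL α × PTL α × PTL α) → List (PTL α × PTL α × PTL α)
  | [] => [(tru a, tru a, tru a)]
  | q :: l => ((negDNF a l).map fun p => (p.1.conj q.1.neg, p.2.1, p.2.2))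
      ++ ((negDNF a l).map fun p => (p.1, p.2.1.conj q.2.1.neg, p.2.2))
      ++ ((negDNF a l).map fun p => (p.1, p.2.1, p.2.2.conj q.2.2.neg))

lemma negDNF_sat (a : α) (w : List α) (nx ny : ℕ) :
    ∀ l : List (PTL α × PTL α × PTL α),
      ((∃ p ∈ negDNF a l, PTL.Sat w p.1 nx ∧ PTL.Sat w p.2.1 ny ∧ PTL.Models w p.2.2) ↔
        ∀ q ∈ l, ¬ (PTL.Sat w q.1 nx ∧ PTL.Sat w q.2.1 ny ∧ PTL.Models w q.2.2)) := by
  intro l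
  induction l with
  | nil => simp [negDNF, PTL.Models]
  | cons q l ih =>
      simp only [negDNF, List.mem_append, List.mem_map, List.mem_cons]
      constructor
      · rintro ⟨p, (hp | hp) | hp, h1, h2, h3⟩ <;>
        · obtain ⟨p', hp', rfl⟩ := hp
          simp only [PTL.Sat, PTL.Models] at h1 h2 h3 ⊢
          intro r hr
          rcases hr with rfl | hr
          · tauto
          · exact (ih.mp ⟨p', hp', by tauto⟩) r hr
      · intro h
        have hq := h q (Or.inl rfl)
        have hl : ∃ p ∈ negDNF a l, PTL.Sat w p.1 nx ∧ PTL.Sat w p.2.1 ny ∧ PTL.Models w p.2.2 :=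
          ih.mpr fun r hr => h r (Or.inr hr)
        obtain ⟨p, hp, h1, h2, h3⟩ := hl
        simp only [PTL.Models] at hq
        rcases not_and_or.mp hq with hq1 | hq2
        · exact ⟨_, Or.inl (Or.inl ⟨p, hp, rfl⟩), by simp only [PTL.Sat]; tauto⟩
        rcases not_and_or.mp hq2 with hq1 | hq2
        · exact ⟨_, Or.inl (Or.inr ⟨p, hp, rfl⟩), by simp only [PTL.Sat]; tauto⟩
        · exact ⟨_, Or.inr ⟨p, hp, rfl⟩, by simp only [PTL.Models, PTL.Sat]; tauto⟩

end Aux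

section Key
variable {α : Type*}

lemma key (a : α) (φ : PFO α) :
    ∃ l : List (PTL α × PTL α × PTL α), ∀ (w : List α) (ρ : PVar → ℕ),
      PFO.Sat w φ ρ ↔
        ∃ p ∈ l, PTL.Sat w p.1 (ρ .x) ∧ PTL.Sat w p.2.1 (ρ .y) ∧ PTL.Models w p.2.2 := by
  induction φ with
  | atom b v =>
      cases v with
      | x =>
          refine ⟨[(.atom b, tru a, tru a)], fun w ρ => ?_⟩
          simp [PFO.Sat, PTL.Sat, PTL.Models]
      | y =>
          refine ⟨[(tru a, .atom b, tru a)], fun w ρ => ?_⟩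
          simp [PFO.Sat, PTL.Sat, PTL.Models]
  | conj φ₁ φ₂ ih₁ ih₂ =>
      obtain ⟨l₁, h₁⟩ := ih₁
      obtain ⟨l₂, h₂⟩ := ih₂
      refine ⟨l₁.flatMap fun p => l₂.map fun q =>
        (p.1.conj q.1, p.2.1.conj q.2.1, p.2.2.conj q.2.2), fun w ρ => ?_⟩
      simp only [PFO.Sat, h₁ w ρ, h₂ w ρ, List.mem_flatMap, List.mem_map]
      constructor
      · rintro ⟨⟨p, hp, hp1, hp2, hp3⟩, ⟨q, hq, hq1, hq2, hq3⟩⟩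
        exact ⟨_, ⟨p, hp, q, hq, rfl⟩, ⟨hp1, hq1⟩, ⟨hp2, hq2⟩, ⟨hp3, hq3⟩⟩
      · rintro ⟨r, ⟨p, hp, q, hq, rfl⟩, ⟨hp1, hq1⟩, ⟨hp2, hq2⟩, ⟨hp3, hq3⟩⟩
        exact ⟨⟨p, hp, hp1, hp2, hp3⟩, ⟨q, hq, hq1, hq2, hq3⟩⟩
  | neg φ ih =>
      obtain ⟨l, h⟩ := ih
      refine ⟨negDNF a l, fun w ρ => ?_⟩
      rw [negDNF_sat]
      simp only [PFO.Sat, h w ρ, not_exists]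
      push_neg
      rfl
  | existsLt v φ ih =>
      obtain ⟨l, h⟩ := ih
      cases v with
      | y =>
          refine ⟨l.map fun p => (p.1.conj p.2.1.past, tru a, p.2.2), fun w ρ => ?_⟩
          simp only [PFO.Sat, List.mem_map]
          constructor
          · rintro ⟨m, hm1, hm2, hm⟩
            rw [h] at hm
            obtain ⟨p, hp, h1, h2, h3⟩ := hm
            rw [Function.update_of_ne (by decide)] at h1
            rw [Function.update_self] at h2
            refine ⟨_, ⟨p, hp, rfl⟩, ⟨h1, m, hm1, ?_, h2⟩, tru_sat a w _, h3⟩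
            simpa [PVar.other] using hm2
          · rintro ⟨r, ⟨p, hp, rfl⟩, ⟨h1, m, hm1, hm2, h2⟩, -, h3⟩
            refine ⟨m, hm1, by simpa [PVar.other] using hm2, ?_⟩
            rw [h]
            refine ⟨p, hp, ?_, ?_, h3⟩
            · rwa [Function.update_of_ne (by decide)]
            · rwa [Function.update_self]
      | x =>
          refine ⟨l.map fun p => (tru a, p.2.1.conj p.1.past, p.2.2), fun w ρ => ?_⟩
          simp only [PFO.Sat, List.mem_map]
          constructor
          · rintro ⟨m, hm1, hm2, hm⟩
            rw [h] at hm
            obtain ⟨p, hp, h1, h2, h3⟩ := hm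
            rw [Function.update_self] at h1
            rw [Function.update_of_ne (by decide)] at h2
            refine ⟨_, ⟨p, hp, rfl⟩, tru_sat a w _, ⟨h2, m, hm1, ?_, h1⟩, h3⟩
            simpa [PVar.other] using hm2
          · rintro ⟨r, ⟨p, hp, rfl⟩, -, ⟨h2, m, hm1, hm2, h1⟩, h3⟩
            refine ⟨m, hm1, by simpa [PVar.other] using hm2, ?_⟩
            rw [h]
            refine ⟨p, hp, ?_, ?_, h3⟩
            · rwa [Function.update_self]
            · rwa [Function.update_of_ne (by decide)]
  | existsUnb v φ ih =>
      obtain ⟨l, h⟩ := ih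
      cases v with
      | y =>
          refine ⟨l.map fun p => (p.1, tru a, p.2.1.past.conj p.2.2), fun w ρ => ?_⟩
          simp only [PFO.Sat, List.mem_map]
          constructor
          · rintro ⟨m, hm1, hm2, hm⟩
            rw [h] at hm
            obtain ⟨p, hp, h1, h2, h3⟩ := hm
            rw [Function.update_of_ne (by decide)] at h1
            rw [Function.update_self] at h2
            exact ⟨_, ⟨p, hp, rfl⟩, h1, tru_sat a w _,
              ⟨m, hm1, Nat.lt_succ_of_le hm2, h2⟩, h3⟩
          · rintro ⟨r, ⟨p, hp, rfl⟩, h1, -, ⟨m, hm1, hm2, h2⟩, h3⟩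
            refine ⟨m, hm1, Nat.lt_succ_iff.mp hm2, ?_⟩
            rw [h]
            refine ⟨p, hp, ?_, ?_, h3⟩
            · rwa [Function.update_of_ne (by decide)]
            · rwa [Function.update_self]
      | x =>
          refine ⟨l.map fun p => (tru a, p.2.1, p.1.past.conj p.2.2), fun w ρ => ?_⟩
          simp only [PFO.Sat, List.mem_map]
          constructor
          · rintro ⟨m, hm1, hm2, hm⟩
            rw [h] at hm
            obtain ⟨p, hp, h1, h2, h3⟩ := hm
            rw [Function.update_self] at h1
            rw [Function.update_of_ne (by decide)] at h2
            exact ⟨_, ⟨p, hp, rfl⟩, tru_sat a w _, h2,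
              ⟨m, hm1, Nat.lt_succ_of_le hm2, h1⟩, h3⟩
          · rintro ⟨r, ⟨p, hp, rfl⟩, -, h2, ⟨m, hm1, hm2, h1⟩, h3⟩
            refine ⟨m, hm1, Nat.lt_succ_iff.mp hm2, ?_⟩
            rw [h]
            refine ⟨p, hp, ?_, ?_, h3⟩
            · rwa [Function.update_self]
            · rwa [Function.update_of_ne (by decide)]

end Key

section Trans
variable {α : Type*}

/-- Translation of PTL to PFO with one free variable `v`. -/
def T : PTL α → PVar → PFO α
  | .atom a, v => .atom a v
  | .conj ψ₁ ψ₂, v => .conj (T ψ₁ v) (T ψ₂ v)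
  | .neg ψ, v => .neg (T ψ v)
  | .past ψ, v => .existsLt v.other (T ψ v.other)

lemma T_free : ∀ (ψ : PTL α) (v : PVar), (T ψ v).freeVars ⊆ {v} := by
  intro ψ
  induction ψ with
  | atom a => intro v; simp [T, PFO.freeVars]
  | conj ψ₁ ψ₂ ih₁ ih₂ =>
      intro v
      simp only [T, PFO.freeVars]
      exact Finset.union_subset (ih₁ v) (ih₂ v)
  | neg ψ ih =>
      intro v
      simp only [T, PFO.freeVars]
      exact ih v
  | past ψ ih =>
      intro v
      simp only [T, PFO.freeVars, PVar.other_other]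
      exact Finset.union_subset ((Finset.erase_subset_erase _ (ih v.other)).trans
        (by simp)) (by simp)

lemma T_sat (w : List α) :
    ∀ (ψ : PTL α) (v : PVar) (ρ : PVar → ℕ), PFO.Sat w (T ψ v) ρ ↔ PTL.Sat w ψ (ρ v) := by
  intro ψ
  induction ψ with
  | atom a => intro v ρ; simp [T, PFO.Sat, PTL.Sat]
  | conj ψ₁ ψ₂ ih₁ ih₂ =>
      intro v ρ; simp only [T, PFO.Sat, PTL.Sat, ih₁, ih₂]
  | neg ψ ih => intro v ρ; simp only [T, PFO.Sat, PTL.Sat, ih]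
  | past ψ ih =>
      intro v ρ
      simp only [T, PFO.Sat, PTL.Sat, PVar.other_other, ih]
      refine exists_congr fun m => and_congr_right fun _ => and_congr_right fun _ => ?_
      rw [Function.update_self]

/-- Translation of PTL formulas to PFO sentences (satisfaction at position `N+1`). -/
def TopF : PTL α → PFO α
  | .atom a => .existsUnb .x (.conj (.atom a .x) (.neg (.atom a .x)))
  | .conj ψ₁ ψ₂ => .conj (TopF ψ₁) (TopF ψ₂)
  | .neg ψ => .neg (TopF ψ)
  | .past ψ => .existsUnb .x (T ψ .x)

lemma TopF_free : ∀ ψ : PTL α, (TopF ψ).freeVars = ∅ := by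
  intro ψ
  induction ψ with
  | atom a => simp [TopF, PFO.freeVars]
  | conj ψ₁ ψ₂ ih₁ ih₂ => simp [TopF, PFO.freeVars, ih₁, ih₂]
  | neg ψ ih => simpa [TopF, PFO.freeVars] using ih
  | past ψ =>
      simp only [TopF, PFO.freeVars]
      rw [Finset.eq_empty_iff_forall_notMem]
      intro v hv
      rw [Finset.mem_erase] at hv
      have := T_free ψ .x hv.2
      rw [Finset.mem_singleton] at this
      exact hv.1 this

lemma TopF_sat (w : List α) :
    ∀ (ψ : PTL α) (ρ : PVar → ℕ), PFO.Sat w (TopF ψ) ρ ↔ PTL.Models w ψ := by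
  intro ψ
  induction ψ with
  | atom a =>
      intro ρ
      simp only [TopF, PFO.Sat, PTL.Models, PTL.Sat]
      constructor
      · rintro ⟨m, -, -, h, hn⟩; exact absurd h hn
      · rintro ⟨-, h⟩
        simp only [Nat.add_sub_cancel] at h
        rw [List.getElem?_eq_none (le_refl _)] at h
        exact absurd h (by simp)
  | conj ψ₁ ψ₂ ih₁ ih₂ =>
      intro ρ
      simp only [TopF, PFO.Sat]
      rw [ih₁, ih₂]
      simp only [PTL.Models, PTL.Sat]
  | neg ψ ih =>
      intro ρ
      simp only [TopF, PFO.Sat]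
      rw [ih]
      simp only [PTL.Models, PTL.Sat]
  | past ψ ih =>
      intro ρ
      simp only [TopF, PFO.Sat, PTL.Models, PTL.Sat, T_sat, Function.update_self,
        Nat.lt_succ_iff]

end Trans

/-- PFO and PTL have the same expressive power: a language is definable by
a PFO sentence iff it is PTL-definable. -/
theorem pfo_iff_ptl_definable {α : Type*} [Fintype α] (L : Set (List α)) :
    PFODefinable L ↔ PTLDefinable L := by
  constructor
  · rintro ⟨φ, hfree, hL⟩
    obtain ⟨l, hl⟩ := key φ.wit φ
    refine ⟨disj φ.wit (l.map fun p => p.1.conj (p.2.1.conj p.2.2)), fun w => ?_⟩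
    rw [hL w]
    have hconst : ∀ ρ : PVar → ℕ, PFO.Sat w φ ρ ↔ PFO.Sat w φ (fun _ => w.length + 1) := by
      intro ρ
      exact PFO.sat_ext w φ _ _ (fun v hv => by rw [hfree] at hv; exact absurd hv (by simp))
    constructor
    · intro h
      have := (hl w (fun _ => w.length + 1)).mp (h _)
      obtain ⟨p, hp, h1, h2, h3⟩ := this
      rw [PTL.Models, disj_sat]
      exact ⟨_, List.mem_map.mpr ⟨p, hp, rfl⟩, h1, h2, h3⟩
    · intro h ρ
      rw [hconst ρ, hl w]
      rw [PTL.Models, disj_sat] at h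
      obtain ⟨ψ, hψ, hs⟩ := h
      obtain ⟨p, hp, rfl⟩ := List.mem_map.mp hψ
      exact ⟨p, hp, hs.1, hs.2.1, hs.2.2⟩
  · rintro ⟨ψ, hψ⟩
    refine ⟨TopF ψ, TopF_free ψ, fun w => ?_⟩
    rw [hψ w]
    constructor
    · intro h ρ; exact (TopF_sat w ψ ρ).mpr h
    · intro h; exact (TopF_sat w ψ (fun _ => 0)).mp (h _)
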